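/- Let m be any product making the tensor coalgebra (T(V), Δ) (deconcatenation coproduct) into a bialgebra with unit 1 ∈ V^{⊗0}. Then T(V) is a Hopf algebra: the map S defined by S(1) = 1 and S(v_1⊤…⊤v_n) = −Σ_{c ⊆ {1,…,n−1}} (−1)^{|c|} (v_1⊤…⊤v_n)_c is an antipode, where (v_1⊤…⊤v_n)_c replaces the i-th concatenation ⊤ by the product m for every i ∈ c. -/

import Mathlib

open TensorProduct

section TensorPowers

variable (K : Type) [Field K] (M : Type) [AddCommGroup M] [Module K M]

/-- Tensor powers modelling `V^{⊗n}`: `W 0 = K`, `W (n+1) = W n ⊗ V`. -/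
noncomputable def WM : ℕ → ModuleCat K
  | 0 => ModuleCat.of K K
  | n + 1 => ModuleCat.of K (WM n ⊗[K] M)

/-- The underlying type of `WM`. -/
noncomputable abbrev Wt (n : ℕ) : Type := WM K M n

/-- The pure tensor `v 0 ⊗ ⋯ ⊗ v (n-1)` in `Wt n = V^{⊗n}`. -/
noncomputable def wpure : (n : ℕ) → (Fin n → M) → Wt K M n
  | 0, _ => (1 : K)
  | n + 1, v => (wpure n (fun i => v i.castSucc)) ⊗ₜ[K] v (Fin.last n)

end TensorPowers

/-- Cut a word `v₁⊤…⊤vₙ` into blocks according to a set of cut positions: each separator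
carries a Boolean which is `true` exactly when the corresponding `⊤` is replaced by the
product (so it starts a new block). -/
def pieces {V : Type} : V → List (Bool × V) → List (List V)
  | v, [] => [[v]]
  | v, (b, w) :: r =>
    match pieces w r with
    | [] => [[v]]
    | B :: Bs => if b then [v] :: B :: Bs else (v :: B) :: Bs

section Words

variable (K : Type) [Field K] (V : Type) [AddCommGroup V] [Module K V]
variable (C : Type) [AddCommGroup C] [Module K C]

/-- The word `v₁ ⊤ … ⊤ vₙ` of `T(V)`, realized in `C` via the embeddings `emb`. -/
noncomputable def word (emb : (n : ℕ) → Wt K V n →ₗ[K] C) (n : ℕ) (v : Fin n → V) : C :=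
  emb n (wpure K V n v)

/-- The word associated with a list of letters. -/
noncomputable def wordL (emb : (n : ℕ) → Wt K V n →ₗ[K] C) (l : List V) : C :=
  word K V C emb l.length (fun i => l.get i)

/-- The empty word `1 ∈ V^{⊗0} = K`, realized in `C`. -/
noncomputable def onec (emb : (n : ℕ) → Wt K V n →ₗ[K] C) : C :=
  word K V C emb 0 (fun i => i.elim0)

/-- The induced multiplication on `C ⊗ C`: `(a ⊗ b)(c ⊗ d) = (a c) ⊗ (b d)`. -/
noncomputable def mul2 (m : C →ₗ[K] C →ₗ[K] C) :
    (C ⊗[K] C) ⊗[K] (C ⊗[K] C) →ₗ[K] C ⊗[K] C :=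
  (TensorProduct.map (TensorProduct.lift m) (TensorProduct.lift m)) ∘ₗ
    (TensorProduct.tensorTensorTensorComm K C C C C).toLinearMap

/-- `(v₁⊤…⊤vₙ)_c`: the element of `C` obtained by replacing the `i`-th `⊤` of the word by
the product `m` for every cut position `i ∈ c` (the cuts being encoded by the Booleans):
the ordered product of the blocks of the word. -/
noncomputable def cutElem (emb : (n : ℕ) → Wt K V n →ₗ[K] C) (m : C →ₗ[K] C →ₗ[K] C)
    (v : V) (rest : List (Bool × V)) : C :=
  ((pieces v rest).map (wordL K V C emb)).foldr (fun a acc => m a acc) (onec K V C emb)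

end Words

section Aux

variable {K : Type} [Field K] {V : Type} [AddCommGroup V] [Module K V]
variable {C : Type} [AddCommGroup C] [Module K C] [Coalgebra K C]
variable (emb : (n : ℕ) → Wt K V n →ₗ[K] C)
variable (m : C →ₗ[K] C →ₗ[K] C)

/-- degree-n component submodule -/
noncomputable abbrev Dn (n : ℕ) : Submodule K C := LinearMap.range (emb n)

variable (hint : DirectSum.IsInternal fun n : ℕ => Dn emb n)

noncomputable def eqv : DirectSum ℕ (fun n => Dn emb n) ≃ₗ[K] C :=
  LinearEquiv.ofBijective (DirectSum.coeLinearMap _) hint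

noncomputable def projD (n : ℕ) : C →ₗ[K] Dn emb n :=
  (DirectSum.component K ℕ _ n) ∘ₗ (eqv emb hint).symm.toLinearMap

lemma projD_same {n : ℕ} {x : C} (hx : x ∈ Dn emb n) :
    projD emb hint n x = ⟨x, hx⟩ :=
  hint.ofBijective_coeLinearMap_of_mem hx

lemma projD_ne {n k : ℕ} (hk : n ≠ k) {x : C} (hx : x ∈ Dn emb n) :
    projD emb hint k x = 0 :=
  hint.ofBijective_coeLinearMap_of_mem_ne hk hx

/-- partial antipode: sum of the antipode restricted to degrees `< N`. -/
noncomputable def tAux : ℕ → (C →ₗ[K] C)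
  | 0 => 0
  | 1 => (Dn emb 0).subtype ∘ₗ projD emb hint 0
  | (n+2) => tAux (n+1) -
      ((TensorProduct.lift m ∘ₗ TensorProduct.map LinearMap.id (tAux (n+1)) ∘ₗ
          CoalgebraStruct.comul) ∘ₗ ((Dn emb (n+1)).subtype ∘ₗ projD emb hint (n+1)))

/-- the antipode on the degree-n component. -/
noncomputable def gAux : (n : ℕ) → (Dn emb n →ₗ[K] C)
  | 0 => (Dn emb 0).subtype
  | (n+1) => -((TensorProduct.lift m ∘ₗ TensorProduct.map LinearMap.id (tAux emb m hint (n+1)) ∘ₗ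
      CoalgebraStruct.comul) ∘ₗ (Dn emb (n+1)).subtype)

/-- The antipode. -/
noncomputable def Smap : C →ₗ[K] C :=
  (DirectSum.toModule K ℕ C (gAux emb m hint)) ∘ₗ (eqv emb hint).symm.toLinearMap

lemma Smap_emb (n : ℕ) (y : Wt K V n) :
    Smap emb m hint (emb n y) = gAux emb m hint n ⟨emb n y, ⟨y, rfl⟩⟩ := by
  have h1 : (eqv emb hint).symm (emb n y)
      = DirectSum.lof K ℕ (fun k : ℕ => ↥(Dn emb k)) n ⟨emb n y, ⟨y, rfl⟩⟩ := by
    apply (eqv emb hint).injective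
    rw [LinearEquiv.apply_symm_apply, DirectSum.lof_eq_of]
    exact (DirectSum.coeLinearMap_of (fun k : ℕ => Dn emb k) n ⟨emb n y, ⟨y, rfl⟩⟩).symm
  simp only [Smap, LinearMap.comp_apply, LinearEquiv.coe_coe, h1, DirectSum.toModule_lof]

lemma tAux_one : tAux emb m hint 1 = (Dn emb 0).subtype ∘ₗ projD emb hint 0 := rfl

lemma tAux_succ_succ (n : ℕ) : tAux emb m hint (n+2) = tAux emb m hint (n+1) -
      ((TensorProduct.lift m ∘ₗ TensorProduct.map LinearMap.id (tAux emb m hint (n+1)) ∘ₗ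
          CoalgebraStruct.comul) ∘ₗ ((Dn emb (n+1)).subtype ∘ₗ projD emb hint (n+1))) := rfl

lemma tAux_emb : ∀ N n (y : Wt K V n),
    (n < N → tAux emb m hint N (emb n y) = Smap emb m hint (emb n y)) ∧
    (N ≤ n → tAux emb m hint N (emb n y) = 0) := by
  intro N
  induction N with
  | zero => intro n y; exact ⟨fun h => absurd h (Nat.not_lt_zero n), fun _ => rfl⟩
  | succ N ih =>
    intro n y
    have hproj_ne : ∀ k, n ≠ k → ((Dn emb k).subtype ∘ₗ projD emb hint k) (emb n y) = 0 := by
      intro k hk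
      simp only [LinearMap.comp_apply, projD_ne emb hint hk ⟨y, rfl⟩, map_zero]
    constructor
    · intro hn
      rcases Nat.lt_succ_iff_lt_or_eq.mp hn with hn | rfl
      · -- n < N
        have h0 := (ih n y).1 hn
        match N, hn, h0 with
        | N+1, hn, h0 =>
          rw [tAux_succ_succ, LinearMap.sub_apply, h0, LinearMap.comp_apply,
            hproj_ne (N+1) (by omega), map_zero, sub_zero]
      · -- n = N
        have h0 := (ih n y).2 le_rfl
        match n, y, h0 with
        | 0, y, h0 =>
          rw [tAux_one, LinearMap.comp_apply, projD_same emb hint ⟨y, rfl⟩, Smap_emb]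
          rfl
        | n+1, y, h0 =>
          rw [tAux_succ_succ, LinearMap.sub_apply, h0, zero_sub, Smap_emb]
          simp only [LinearMap.comp_apply]
          rw [projD_same emb hint ⟨y, rfl⟩]
          show -_ = gAux emb m hint (n+1) _
          rw [gAux]
          simp
    · intro hn
      have h0 := (ih n y).2 (by omega)
      match N, h0 with
      | 0, h0 =>
        rw [tAux_one, hproj_ne 0 (by omega)]
      | N+1, h0 =>
        rw [tAux_succ_succ, LinearMap.sub_apply, h0, LinearMap.comp_apply,
          hproj_ne (N+1) (by omega), map_zero, sub_zero]

lemma wordL_nil : wordL K V C emb [] = onec K V C emb := rfl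

lemma word_zero (v : Fin 0 → V) : word K V C emb 0 v = onec K V C emb := rfl

lemma wordL_eq_word (l : List V) (nn : ℕ) (h : l.length = nn) (v : Fin nn → V)
    (hv : ∀ i : Fin nn, l.get ⟨i.1, by omega⟩ = v i) :
    wordL K V C emb l = word K V C emb nn v := by
  subst h
  unfold wordL
  congr 1
  funext i
  simpa using hv i

lemma word_eq_wordL (n : ℕ) (v : Fin n → V) :
    word K V C emb n v = wordL K V C emb (List.ofFn v) := by
  refine (wordL_eq_word emb _ n List.length_ofFn v (fun i => ?_)).symm
  simp

lemma tAux_wordL_lt (N : ℕ) (l : List V) (h : l.length < N) :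
    tAux emb m hint N (wordL K V C emb l) = Smap emb m hint (wordL K V C emb l) :=
  (tAux_emb emb m hint N l.length _).1 h

lemma tAux_wordL_ge (N : ℕ) (l : List V) (h : N ≤ l.length) :
    tAux emb m hint N (wordL K V C emb l) = 0 :=
  (tAux_emb emb m hint N l.length _).2 h

lemma Smap_onec : Smap emb m hint (onec K V C emb) = onec K V C emb := by
  rw [show onec K V C emb = emb 0 (wpure K V 0 (fun i => i.elim0)) from rfl, Smap_emb]
  rfl

section withComul

variable (hcomul : ∀ (n : ℕ) (v : Fin n → V),
      CoalgebraStruct.comul (R := K) (word K V C emb n v)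
        = ∑ k : Fin (n + 1),
            word K V C emb k.1 (fun i => v ⟨i.1, by have := i.2; omega⟩)
              ⊗ₜ[K] word K V C emb (n - k.1) (fun i => v ⟨k.1 + i.1, by have := i.2; omega⟩))

include hcomul in
lemma comul_wordL (l : List V) :
    CoalgebraStruct.comul (R := K) (wordL K V C emb l)
      = ∑ k ∈ Finset.range (l.length + 1),
          wordL K V C emb (l.take k) ⊗ₜ[K] wordL K V C emb (l.drop k) := by
  have h0 : wordL K V C emb l = word K V C emb l.length l.get := rfl
  rw [h0, hcomul]
  rw [show (∑ k ∈ Finset.range (l.length + 1),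
      wordL K V C emb (l.take k) ⊗ₜ[K] wordL K V C emb (l.drop k))
    = ∑ k : Fin (l.length + 1),
      wordL K V C emb (l.take k.1) ⊗ₜ[K] wordL K V C emb (l.drop k.1) from
    (Fin.sum_univ_eq_sum_range (fun k => wordL K V C emb (l.take k) ⊗ₜ[K]
      wordL K V C emb (l.drop k)) (l.length + 1)).symm]
  refine Finset.sum_congr rfl (fun k _ => ?_)
  have hk : k.1 ≤ l.length := by omega
  congr 1
  · refine (wordL_eq_word emb _ k.1 (by simp [List.length_take]; omega) _ (fun i => ?_)).symm
    simp only [List.get_eq_getElem, List.getElem_take]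
  · refine (wordL_eq_word emb _ (l.length - k.1) (by simp) _ (fun i => ?_)).symm
    simp only [List.get_eq_getElem, List.getElem_drop]

include hcomul in
lemma Smap_cons (v : V) (vs : List V) :
    Smap emb m hint (wordL K V C emb (v::vs)) =
      -∑ k ∈ Finset.range (vs.length+1),
        m (wordL K V C emb ((v::vs).take (k+1)))
          (Smap emb m hint (wordL K V C emb ((v::vs).drop (k+1)))) := by
  have h1 : wordL K V C emb (v::vs)
      = emb (vs.length+1) (wpure K V (vs.length+1) (fun i => (v::vs).get i)) := rfl
  rw [h1, Smap_emb]
  show -((TensorProduct.lift m ∘ₗ TensorProduct.map LinearMap.id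
      (tAux emb m hint (vs.length+1)) ∘ₗ CoalgebraStruct.comul) ∘ₗ
      (Dn emb (vs.length+1)).subtype) ⟨_, _⟩ = _
  simp only [LinearMap.comp_apply, Submodule.coe_subtype]
  rw [← h1, comul_wordL emb hcomul (v::vs)]
  simp only [map_sum, TensorProduct.map_tmul, TensorProduct.lift.tmul,
    LinearMap.id_coe, id_eq]
  rw [show ((v::vs).length + 1) = (vs.length + 1) + 1 from rfl, Finset.sum_range_succ']
  rw [List.drop_zero, tAux_wordL_ge emb m hint _ _ (by simp), map_zero, add_zero]
  congr 1
  refine Finset.sum_congr rfl (fun k hk => ?_)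
  rw [tAux_wordL_lt emb m hint _ _ (by simp)]

section counits

variable (hcounit0 : CoalgebraStruct.counit (R := K) (onec K V C emb) = 1)
variable (hcounit : ∀ (n : ℕ) (v : Fin (n + 1) → V),
      CoalgebraStruct.counit (R := K) (word K V C emb (n + 1) v) = 0)
variable (hassoc : ∀ a b c : C, m (m a b) c = m a (m b c))
variable (hone : ∀ a : C, m (onec K V C emb) a = a ∧ m a (onec K V C emb) = a)

include hcounit in
lemma counit_wordL_ne_nil {l : List V} (h : l ≠ []) :
    CoalgebraStruct.counit (R := K) (wordL K V C emb l) = 0 := by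
  match l, h with
  | v :: vs, _ =>
    have h1 : wordL K V C emb (v::vs) = word K V C emb (vs.length + 1) ((v::vs).get) := rfl
    rw [h1, hcounit]

include hcomul hcounit0 hcounit hone in
lemma RI_words (l : List V) :
    ∑ k ∈ Finset.range (l.length + 1),
        m (wordL K V C emb (l.take k)) (Smap emb m hint (wordL K V C emb (l.drop k)))
      = CoalgebraStruct.counit (R := K) (wordL K V C emb l) • onec K V C emb := by
  cases l with
  | nil =>
    rw [show (([] : List V).length + 1) = 1 from rfl, Finset.sum_range_one]
    simp only [List.take_nil, List.drop_nil, wordL_nil, Smap_onec]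
    rw [(hone _).1, hcounit0, one_smul]
  | cons v vs =>
    rw [counit_wordL_ne_nil emb hcounit (by simp), zero_smul,
      show ((v::vs).length + 1) = (vs.length + 1) + 1 from rfl, Finset.sum_range_succ',
      List.take_zero, List.drop_zero, wordL_nil, (hone _).1,
      Smap_cons emb m hint hcomul v vs]
    exact add_neg_cancel _

include hcomul hcounit0 hcounit hassoc hone in
lemma LI_words : ∀ (N : ℕ) (l : List V), l.length ≤ N →
    ∑ k ∈ Finset.range (l.length + 1),
        m (Smap emb m hint (wordL K V C emb (l.take k))) (wordL K V C emb (l.drop k))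
      = CoalgebraStruct.counit (R := K) (wordL K V C emb l) • onec K V C emb := by
  intro N
  induction N with
  | zero =>
    intro l hl
    match l, hl with
    | [], _ =>
      rw [show (([] : List V).length + 1) = 1 from rfl, Finset.sum_range_one]
      simp only [List.take_nil, List.drop_nil, wordL_nil, Smap_onec]
      rw [(hone _).1, hcounit0, one_smul]
  | succ N ih =>
    intro l hl
    match l with
    | [] =>
      rw [show (([] : List V).length + 1) = 1 from rfl, Finset.sum_range_one]
      simp only [List.take_nil, List.drop_nil, wordL_nil, Smap_onec]
      rw [(hone _).1, hcounit0, one_smul]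
    | v :: vs =>
      have hn : vs.length ≤ N := by simpa using hl
      rw [counit_wordL_ne_nil emb hcounit (by simp), zero_smul,
        show ((v::vs).length + 1) = (vs.length + 1) + 1 from rfl, Finset.sum_range_succ',
        List.take_zero, wordL_nil, Smap_onec, (hone _).1, List.drop_zero]
      have key : ∀ k ∈ Finset.range (vs.length+1),
          m (Smap emb m hint (wordL K V C emb ((v::vs).take (k+1))))
            (wordL K V C emb ((v::vs).drop (k+1)))
          = -∑ i ∈ Finset.range (k+1),
              m (wordL K V C emb ((v::vs).take (i+1)))
                (m (Smap emb m hint (wordL K V C emb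
                      (((v::vs).drop (i+1)).take (k-i))))
                  (wordL K V C emb (((v::vs).drop (i+1)).drop (k-i)))) := by
        intro k hk
        have hk' : k ≤ vs.length := by
          have := Finset.mem_range.mp hk; omega
        have hlen : (vs.take k).length = k := by
          simp [List.length_take]; omega
        rw [List.take_succ_cons, Smap_cons emb m hint hcomul v (vs.take k), hlen,
          map_neg, LinearMap.neg_apply, neg_inj, map_sum, LinearMap.sum_apply]
        refine Finset.sum_congr rfl (fun i hi => ?_)
        have hi' : i ≤ k := by
          have := Finset.mem_range.mp hi; omega
        have e0 : (v :: vs.take k) = (v::vs).take (k+1) := List.take_succ_cons.symm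
        have e1 : (v :: vs.take k).take (i+1) = (v::vs).take (i+1) := by
          rw [e0, List.take_take, Nat.min_eq_left (by omega)]
        have e2 : (v :: vs.take k).drop (i+1) = ((v::vs).drop (i+1)).take (k-i) := by
          rw [e0, List.drop_take, Nat.succ_sub_succ]
        have e3 : (v::vs).drop (k+1) = ((v::vs).drop (i+1)).drop (k-i) := by
          rw [List.drop_drop, show (i+1) + (k-i) = k+1 from by omega]
        rw [e1, e2, e3, hassoc]
      rw [Finset.sum_congr rfl key]
      have swap : ∑ k ∈ Finset.range (vs.length+1), ∑ i ∈ Finset.range (k+1),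
            m (wordL K V C emb ((v::vs).take (i+1)))
              (m (Smap emb m hint (wordL K V C emb
                    (((v::vs).drop (i+1)).take (k-i))))
                (wordL K V C emb (((v::vs).drop (i+1)).drop (k-i))))
          = ∑ i ∈ Finset.range (vs.length+1), ∑ k ∈ Finset.Ico i (vs.length+1),
            m (wordL K V C emb ((v::vs).take (i+1)))
              (m (Smap emb m hint (wordL K V C emb
                    (((v::vs).drop (i+1)).take (k-i))))
                (wordL K V C emb (((v::vs).drop (i+1)).drop (k-i)))) :=
        Finset.sum_comm' (fun k i => by
          simp only [Finset.mem_range, Finset.mem_Ico]; omega)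
      have inner : ∀ i ∈ Finset.range (vs.length+1),
          (∑ k ∈ Finset.Ico i (vs.length+1),
            m (wordL K V C emb ((v::vs).take (i+1)))
              (m (Smap emb m hint (wordL K V C emb
                    (((v::vs).drop (i+1)).take (k-i))))
                (wordL K V C emb (((v::vs).drop (i+1)).drop (k-i)))))
          = CoalgebraStruct.counit (R := K) (wordL K V C emb ((v::vs).drop (i+1)))
              • wordL K V C emb ((v::vs).take (i+1)) := by
        intro i hi
        have hi' : i ≤ vs.length := by
          have := Finset.mem_range.mp hi; omega
        rw [Finset.sum_Ico_eq_sum_range]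
        simp only [Nat.add_sub_cancel_left]
        rw [← map_sum,
          show (vs.length + 1 - i) = ((v::vs).drop (i+1)).length + 1 from by
            simp [List.length_drop]; omega,
          ih ((v::vs).drop (i+1)) (by simp [List.length_drop]; omega),
          map_smul, (hone _).2]
      rw [Finset.sum_neg_distrib, swap, Finset.sum_congr rfl inner,
        Finset.sum_range_succ,
        show (v::vs).drop (vs.length+1) = [] from by simp,
        show (v::vs).take (vs.length+1) = v::vs from by simp,
        wordL_nil, hcounit0, one_smul,
        Finset.sum_eq_zero (fun i hi => by
          rw [counit_wordL_ne_nil emb hcounit (fun h => by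
            have := congrArg List.length h
            simp only [List.length_drop, List.length_cons, List.length_nil] at this
            have := Finset.mem_range.mp hi
            omega), zero_smul]),
        zero_add]
      exact neg_add_cancel _

end counits

lemma wpure_span (n : ℕ) :
    Submodule.span K (Set.range (wpure K V n)) = ⊤ := by
  induction n with
  | zero =>
    rw [Submodule.eq_top_iff']
    intro x
    have hx : x = (show K from x) • wpure K V 0 (fun i => i.elim0) := by
      show (show K from x) = (show K from x) * (1 : K)
      rw [mul_one]
    rw [hx]
    exact Submodule.smul_mem _ _ (Submodule.subset_span ⟨_, rfl⟩)
  | succ n ih =>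
    rw [Submodule.eq_top_iff']
    intro x
    have htop : x ∈ Submodule.span K {t : Wt K V (n+1) | ∃ a b, a ⊗ₜ[K] b = t} := by
      have hx : (x : (Wt K V n) ⊗[K] V) ∈
          Submodule.span K {t : (Wt K V n) ⊗[K] V | ∃ a b, a ⊗ₜ[K] b = t} := by
        rw [TensorProduct.span_tmul_eq_top]
        trivial
      exact hx
    refine Submodule.span_induction (fun t ht => ?_) (Submodule.zero_mem _)
      (fun a b _ _ ha hb => Submodule.add_mem _ ha hb)
      (fun c a _ ha => Submodule.smul_mem _ c ha) htop
    obtain ⟨a, b, rfl⟩ := ht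
    have ha : a ∈ Submodule.span K (Set.range (wpure K V n)) := by rw [ih]; trivial
    refine Submodule.span_induction (fun w hw => ?_) ?_ ?_ ?_ ha
    · obtain ⟨w, rfl⟩ := hw
      refine Submodule.subset_span ⟨Fin.snoc w b, ?_⟩
      rw [show wpure K V (n+1) (Fin.snoc w b)
          = (wpure K V n (fun i : Fin n => (Fin.snoc w b : Fin (n+1) → V) i.castSucc)) ⊗ₜ[K]
              ((Fin.snoc w b : Fin (n+1) → V) (Fin.last n)) from rfl,
        Fin.snoc_last]
      congr 2
      funext i
      rw [Fin.snoc_castSucc]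
    · rw [TensorProduct.zero_tmul]; exact Submodule.zero_mem _
    · intro p q _ _ hp hq
      rw [TensorProduct.add_tmul]; exact Submodule.add_mem _ hp hq
    · intro c p _ hp
      rw [← TensorProduct.smul_tmul']; exact Submodule.smul_mem _ c hp

include hint in
lemma words_span :
    Submodule.span K {x : C | ∃ l : List V, x = wordL K V C emb l} = ⊤ := by
  rw [eq_top_iff, ← hint.submodule_iSup_eq_top]
  refine iSup_le fun n => ?_
  have h1 : (Dn emb n : Submodule K C) = Submodule.map (emb n) ⊤ :=
    (Submodule.map_top _).symm
  rw [h1, ← wpure_span n, Submodule.map_span]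
  refine Submodule.span_le.mpr ?_
  rintro _ ⟨_, ⟨w, rfl⟩, rfl⟩
  refine Submodule.subset_span ⟨List.ofFn w, ?_⟩
  exact word_eq_wordL emb n w

end withComul

section Comb

lemma pieces_cons (w : V) (r : List (Bool × V)) :
    ∃ B Bs, pieces w r = B :: Bs := by
  induction r generalizing w with
  | nil => exact ⟨[w], [], rfl⟩
  | cons p r ih =>
    obtain ⟨b, x⟩ := p
    obtain ⟨B, Bs, h⟩ := ih x
    cases b with
    | false => exact ⟨w :: B, Bs, by simp [pieces, h]⟩
    | true => exact ⟨[w], B :: Bs, by simp [pieces, h]⟩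

lemma pieces_all_false (us : List V) (u : V) :
    pieces u (us.map (fun w => (false, w))) = [u :: us] := by
  induction us generalizing u with
  | nil => rfl
  | cons w us ih => simp [pieces, ih w]

lemma pieces_split (us : List V) (u w : V) (r : List (Bool × V)) :
    pieces u (us.map (fun x => (false, x)) ++ (true, w) :: r)
      = (u :: us) :: pieces w r := by
  induction us generalizing u with
  | nil =>
    obtain ⟨B, Bs, h⟩ := pieces_cons w r
    simp [pieces, h]
  | cons x us ih => simp [pieces, ih x]

variable (hone : ∀ a : C, m (onec K V C emb) a = a ∧ m a (onec K V C emb) = a)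

include hone in
lemma cutElem_all_false (u : V) (us : List V) :
    cutElem K V C emb m u (us.map (fun w => (false, w))) = wordL K V C emb (u :: us) := by
  unfold cutElem
  rw [pieces_all_false]
  simp only [List.map_cons, List.map_nil, List.foldr_cons, List.foldr_nil]
  exact (hone _).2

lemma cutElem_split (u : V) (us : List V) (w : V) (r : List (Bool × V)) :
    cutElem K V C emb m u (us.map (fun x => (false, x)) ++ (true, w) :: r)
      = m (wordL K V C emb (u :: us)) (cutElem K V C emb m w r) := by
  unfold cutElem
  rw [pieces_split]
  simp only [List.map_cons, List.foldr_cons]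

/-- The signed sum over all cuts. -/
noncomputable def Nsum (v : V) (vs : List V) : C :=
  ∑ msk : Fin vs.length → Bool,
    ((-1 : K) ^ (Finset.univ.filter fun i => msk i = true).card) •
      cutElem K V C emb m v (List.zip (List.ofFn msk) vs)

lemma card_filter_cons (n : ℕ) (b : Bool) (msk : Fin n → Bool) :
    (Finset.univ.filter fun i : Fin (n+1) => (Fin.cons b msk : Fin (n+1) → Bool) i = true).card
      = (if b then 1 else 0) + (Finset.univ.filter fun i => msk i = true).card := by
  rw [Finset.card_filter, Finset.card_filter, Fin.sum_univ_succ]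
  simp [Fin.cons_succ, Fin.cons_zero]

lemma ofFn_cons (n : ℕ) (b : Bool) (msk : Fin n → Bool) :
    List.ofFn (Fin.cons b msk : Fin (n+1) → Bool) = b :: List.ofFn msk := by
  rw [List.ofFn_succ]
  simp [Fin.cons_succ, Fin.cons_zero]

include hone in
lemma Gsum : ∀ (vs : List V) (u : V) (us : List V),
    (∑ msk : Fin vs.length → Bool,
        ((-1 : K) ^ (Finset.univ.filter fun i => msk i = true).card) •
          cutElem K V C emb m u
            (us.map (fun x => (false, x)) ++ List.zip (List.ofFn msk) vs))
    = wordL K V C emb (u :: (us ++ vs))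
      - ∑ j : Fin vs.length,
          m (wordL K V C emb (u :: (us ++ vs.take j.1)))
            (Nsum emb m (vs.get j) (vs.drop (j.1+1))) := by
  intro vs
  induction vs with
  | nil =>
    intro u us
    show (∑ msk : Fin 0 → Bool,
        ((-1 : K) ^ (Finset.univ.filter fun i => msk i = true).card) •
          cutElem K V C emb m u
            (us.map (fun x => (false, x)) ++ List.zip (List.ofFn msk) ([] : List V)))
      = wordL K V C emb (u :: (us ++ ([] : List V)))
        - ∑ j : Fin 0,
            m (wordL K V C emb (u :: (us ++ List.take j.1 ([] : List V))))
              (Nsum emb m (([] : List V).get j) (List.drop (j.1+1) ([] : List V)))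
    rw [Finset.sum_eq_single_of_mem (fun _ : Fin 0 => false) (Finset.mem_univ _)
      (fun g _ hg => absurd (funext fun i => i.elim0) hg)]
    simp only [List.zip_nil_right, List.append_nil]
    rw [show (Finset.univ.filter fun i : Fin 0 => (fun _ : Fin 0 => false) i = true).card = 0
      from rfl, pow_zero, one_smul, cutElem_all_false emb m hone]
    rw [Finset.univ_eq_empty, Finset.sum_empty, sub_zero]
  | cons w vs' ih =>
    intro u us
    show (∑ msk : Fin (vs'.length + 1) → Bool,
        ((-1 : K) ^ (Finset.univ.filter fun i => msk i = true).card) •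
          cutElem K V C emb m u
            (us.map (fun x => (false, x)) ++ List.zip (List.ofFn msk) (w :: vs')))
      = wordL K V C emb (u :: (us ++ w :: vs'))
        - ∑ j : Fin (vs'.length + 1),
            m (wordL K V C emb (u :: (us ++ List.take j.1 (w :: vs'))))
              (Nsum emb m ((w :: vs').get j) (List.drop (j.1+1) (w :: vs')))
    have step1 : (∑ p : Bool × (Fin vs'.length → Bool),
        ((-1 : K) ^ (Finset.univ.filter fun i =>
            (Fin.cons p.1 p.2 : Fin (vs'.length+1) → Bool) i = true).card) •
          cutElem K V C emb m u
            (us.map (fun x => (false, x)) ++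
              List.zip (List.ofFn (Fin.cons p.1 p.2 : Fin (vs'.length+1) → Bool)) (w :: vs')))
        = (∑ msk : Fin (vs'.length + 1) → Bool,
        ((-1 : K) ^ (Finset.univ.filter fun i => msk i = true).card) •
          cutElem K V C emb m u
            (us.map (fun x => (false, x)) ++ List.zip (List.ofFn msk) (w :: vs'))) :=
      Fintype.sum_equiv (Fin.consEquiv (fun _ => Bool)) _ _ (fun p => rfl)
    rw [← step1, Fintype.sum_prod_type, Fintype.sum_bool]
    have htrue : (∑ msk : Fin vs'.length → Bool,
        ((-1 : K) ^ (Finset.univ.filter fun i =>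
            (Fin.cons true msk : Fin (vs'.length+1) → Bool) i = true).card) •
          cutElem K V C emb m u
            (us.map (fun x => (false, x)) ++
              List.zip (List.ofFn (Fin.cons true msk : Fin (vs'.length+1) → Bool)) (w :: vs')))
        = -(m (wordL K V C emb (u :: us)) (Nsum emb m w vs')) := by
      rw [Nsum, map_sum, ← Finset.sum_neg_distrib]
      refine Finset.sum_congr rfl (fun msk _ => ?_)
      rw [ofFn_cons, List.zip_cons_cons, cutElem_split emb m, card_filter_cons,
        if_pos rfl, pow_add, pow_one, map_smul]
      rw [neg_one_mul, neg_smul]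
    have hfalse : (∑ msk : Fin vs'.length → Bool,
        ((-1 : K) ^ (Finset.univ.filter fun i =>
            (Fin.cons false msk : Fin (vs'.length+1) → Bool) i = true).card) •
          cutElem K V C emb m u
            (us.map (fun x => (false, x)) ++
              List.zip (List.ofFn (Fin.cons false msk : Fin (vs'.length+1) → Bool)) (w :: vs')))
        = wordL K V C emb (u :: ((us ++ [w]) ++ vs'))
          - ∑ j : Fin vs'.length,
              m (wordL K V C emb (u :: ((us ++ [w]) ++ vs'.take j.1)))
                (Nsum emb m (vs'.get j) (vs'.drop (j.1+1))) := by
      rw [← ih u (us ++ [w])]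
      refine Finset.sum_congr rfl (fun msk _ => ?_)
      rw [ofFn_cons, List.zip_cons_cons, card_filter_cons, if_neg (by simp), zero_add]
      congr 2
      rw [List.map_append]
      simp [List.append_assoc]
    rw [htrue, hfalse, Fin.sum_univ_succ]
    have hj : ∀ j : Fin vs'.length,
        m (wordL K V C emb (u :: (us ++ List.take (j.succ).1 (w :: vs'))))
          (Nsum emb m ((w :: vs').get j.succ) (List.drop ((j.succ).1+1) (w :: vs')))
        = m (wordL K V C emb (u :: ((us ++ [w]) ++ vs'.take j.1)))
            (Nsum emb m (vs'.get j) (vs'.drop (j.1+1))) := by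
      intro j
      have e : us ++ List.take (j.succ).1 (w :: vs') = (us ++ [w]) ++ vs'.take j.1 := by
        rw [show (j.succ).1 = j.1 + 1 from rfl, List.take_succ_cons]
        simp [List.append_assoc]
      show m (wordL K V C emb (u :: (us ++ List.take (j.succ).1 (w :: vs'))))
          (Nsum emb m (vs'.get j) (vs'.drop (j.1+1))) = _
      rw [e]
    rw [Finset.sum_congr rfl (fun j _ => hj j)]
    have h0 : m (wordL K V C emb (u :: (us ++ List.take (0 : Fin (vs'.length+1)).1 (w :: vs'))))
          (Nsum emb m ((w :: vs').get (0 : Fin (vs'.length+1))) (List.drop ((0 : Fin (vs'.length+1)).1+1) (w :: vs')))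
        = m (wordL K V C emb (u :: us)) (Nsum emb m w vs') := by
      show m (wordL K V C emb (u :: (us ++ List.take 0 (w :: vs')))) (Nsum emb m w vs') = _
      rw [List.take_zero, List.append_nil]
    rw [h0]
    rw [show (u :: ((us ++ [w]) ++ vs')) = (u :: (us ++ w :: vs')) from by
      simp [List.append_assoc]]
    abel

include hone in
lemma Nsum_rec (v : V) (vs : List V) :
    Nsum emb m v vs
      = wordL K V C emb (v :: vs)
        - ∑ j : Fin vs.length,
            m (wordL K V C emb (v :: vs.take j.1))
              (Nsum emb m (vs.get j) (vs.drop (j.1+1))) := by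
  rw [Nsum]
  simpa using Gsum emb m hone vs v []

end Comb

section Final

variable (hint : DirectSum.IsInternal fun n : ℕ => Dn emb n)
variable (hcomul : ∀ (n : ℕ) (v : Fin n → V),
      CoalgebraStruct.comul (R := K) (word K V C emb n v)
        = ∑ k : Fin (n + 1),
            word K V C emb k.1 (fun i => v ⟨i.1, by have := i.2; omega⟩)
              ⊗ₜ[K] word K V C emb (n - k.1) (fun i => v ⟨k.1 + i.1, by have := i.2; omega⟩))
variable (hone : ∀ a : C, m (onec K V C emb) a = a ∧ m a (onec K V C emb) = a)

include hcomul hone in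
lemma Smap_cons_fin (v : V) (vs : List V) :
    Smap emb m hint (wordL K V C emb (v::vs))
      = -(wordL K V C emb (v::vs)
          + ∑ j : Fin vs.length,
              m (wordL K V C emb (v :: vs.take j.1))
                (Smap emb m hint (wordL K V C emb (vs.get j :: vs.drop (j.1+1))))) := by
  rw [Smap_cons emb m hint hcomul v vs, Finset.sum_range_succ,
    show (v::vs).take (vs.length+1) = v::vs from by simp,
    show (v::vs).drop (vs.length+1) = [] from by simp,
    wordL_nil, Smap_onec, (hone _).2, neg_inj, add_comm]
  refine congrArg _ ?_
  rw [← Fin.sum_univ_eq_sum_range (fun k =>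
    m (wordL K V C emb ((v::vs).take (k+1)))
      (Smap emb m hint (wordL K V C emb ((v::vs).drop (k+1))))) vs.length]
  refine Finset.sum_congr rfl (fun j _ => ?_)
  rw [List.take_succ_cons, List.drop_succ_cons, List.get_eq_getElem,
    ← List.drop_eq_getElem_cons j.isLt]

include hcomul hone in
lemma Smap_formula : ∀ (Nb : ℕ) (v : V) (vs : List V), vs.length ≤ Nb →
    Smap emb m hint (wordL K V C emb (v :: vs)) = -Nsum emb m v vs := by
  intro Nb
  induction Nb with
  | zero =>
    intro v vs h
    match vs, h with
    | [], _ =>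
      rw [Smap_cons_fin emb m hint hcomul hone v [], Nsum_rec emb m hone v []]
      simp
  | succ Nb ih =>
    intro v vs h
    rw [Smap_cons_fin emb m hint hcomul hone v vs, Nsum_rec emb m hone v vs]
    have key : ∀ j : Fin vs.length,
        m (wordL K V C emb (v :: vs.take j.1))
            (Smap emb m hint (wordL K V C emb (vs.get j :: vs.drop (j.1+1))))
        = -(m (wordL K V C emb (v :: vs.take j.1))
              (Nsum emb m (vs.get j) (vs.drop (j.1+1)))) := by
      intro j
      rw [ih (vs.get j) (vs.drop (j.1+1)) (by simp [List.length_drop]; omega), map_neg]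
    rw [Finset.sum_congr rfl (fun j _ => key j), Finset.sum_neg_distrib]
    abel

end Final

end Aux

/-- Let `m` be any product making the tensor coalgebra `T(V)` (with the
deconcatenation coproduct, realized as a coalgebra `C` with embeddings `emb` as in the
tensor-coalgebra setup) a bialgebra with unit the empty word `1`. Then `T(V)` is a Hopf
algebra with antipode `S(1) = 1`,
`S(v₁⊤…⊤vₙ) = − Σ_{c ⊆ {1,…,n−1}} (−1)^{|c|} (v₁⊤…⊤vₙ)_c`. -/
theorem stmt_19 (K : Type) [Field K] (V : Type) [AddCommGroup V] [Module K V]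
    (C : Type) [AddCommGroup C] [Module K C] [Coalgebra K C]
    (emb : (n : ℕ) → Wt K V n →ₗ[K] C)
    (hinj : ∀ n, Function.Injective (emb n))
    (hint : DirectSum.IsInternal fun n => LinearMap.range (emb n))
    (hcomul : ∀ (n : ℕ) (v : Fin n → V),
      CoalgebraStruct.comul (R := K) (word K V C emb n v)
        = ∑ k : Fin (n + 1),
            word K V C emb k.1 (fun i => v ⟨i.1, by omega⟩)
              ⊗ₜ[K] word K V C emb (n - k.1) (fun i => v ⟨k.1 + i.1, by omega⟩))
    (hcounit0 : CoalgebraStruct.counit (R := K) (onec K V C emb) = 1)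
    (hcounit : ∀ (n : ℕ) (v : Fin (n + 1) → V),
      CoalgebraStruct.counit (R := K) (word K V C emb (n + 1) v) = 0)
    -- `m` is an associative product with unit the empty word, making `(C, Δ, ε)` a bialgebra
    (m : C →ₗ[K] C →ₗ[K] C)
    (hassoc : ∀ a b c : C, m (m a b) c = m a (m b c))
    (hone : ∀ a : C, m (onec K V C emb) a = a ∧ m a (onec K V C emb) = a)
    (hεm : ∀ a b : C, CoalgebraStruct.counit (R := K) (m a b)
        = CoalgebraStruct.counit (R := K) a * CoalgebraStruct.counit (R := K) b)
    (hΔm : ∀ a b : C, CoalgebraStruct.comul (R := K) (m a b)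
        = mul2 K C m
            ((CoalgebraStruct.comul (R := K) a) ⊗ₜ[K] (CoalgebraStruct.comul (R := K) b))) :
    ∃ S : C →ₗ[K] C,
      S (onec K V C emb) = onec K V C emb ∧
      (∀ (v : V) (vs : List V),
        S (wordL K V C emb (v :: vs))
          = - ∑ msk : Fin vs.length → Bool,
              ((-1 : K) ^ (Finset.univ.filter fun i => msk i = true).card) •
                cutElem K V C emb m v (List.zip (List.ofFn msk) vs)) ∧
      (∀ x : C,
        TensorProduct.lift m
            ((TensorProduct.map S LinearMap.id) (CoalgebraStruct.comul (R := K) x))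
          = CoalgebraStruct.counit (R := K) x • onec K V C emb) ∧
      (∀ x : C,
        TensorProduct.lift m
            ((TensorProduct.map LinearMap.id S) (CoalgebraStruct.comul (R := K) x))
          = CoalgebraStruct.counit (R := K) x • onec K V C emb) := by
  refine ⟨Smap emb m hint, Smap_onec emb m hint, ?_, ?_, ?_⟩
  · intro v vs
    rw [Smap_formula emb m hint hcomul hone vs.length v vs le_rfl, Nsum]
  · have heq : (TensorProduct.lift m ∘ₗ
        TensorProduct.map (Smap emb m hint) LinearMap.id ∘ₗ
          (CoalgebraStruct.comul (R := K) (A := C)))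
        = (CoalgebraStruct.counit (R := K) (A := C)).smulRight (onec K V C emb) := by
      refine LinearMap.ext_on (words_span emb hint) ?_
      rintro x ⟨l, rfl⟩
      simp only [LinearMap.comp_apply, LinearMap.smulRight_apply]
      rw [comul_wordL emb hcomul l, map_sum, map_sum]
      simp only [TensorProduct.map_tmul, TensorProduct.lift.tmul, LinearMap.id_coe, id_eq]
      exact LI_words emb m hint hcomul hcounit0 hcounit hassoc hone l.length l le_rfl
    intro x
    have h := LinearMap.congr_fun heq x
    simpa using h
  · have heq : (TensorProduct.lift m ∘ₗ
        TensorProduct.map LinearMap.id (Smap emb m hint) ∘ₗ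
          (CoalgebraStruct.comul (R := K) (A := C)))
        = (CoalgebraStruct.counit (R := K) (A := C)).smulRight (onec K V C emb) := by
      refine LinearMap.ext_on (words_span emb hint) ?_
      rintro x ⟨l, rfl⟩
      simp only [LinearMap.comp_apply, LinearMap.smulRight_apply]
      rw [comul_wordL emb hcomul l, map_sum, map_sum]
      simp only [TensorProduct.map_tmul, TensorProduct.lift.tmul, LinearMap.id_coe, id_eq]
      exact RI_words emb m hint hcomul hcounit0 hcounit hone l
    intro x
    have h := LinearMap.congr_fun heq x
    simpa using h
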